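/- Let β = (βx, βy) ∈ (0,∞)², let (x⋆, y⋆) be a saddle point of L, and let z = (x,y) ∈ X × Y with f(x) < +∞. Then the outer-saddle smoothed gap satisfies G_β((x⋆, y); (x, y⋆)) ≥ −√(2 βx G_β(z)) · ‖x − x⋆‖. -/

import Mathlib

open scoped RealInnerProductSpace
open Filter Topology Metric

noncomputable section

variable {X Y : Type*} [NormedAddCommGroup X] [InnerProductSpace ℝ X]
  [NormedAddCommGroup Y] [InnerProductSpace ℝ Y]

/-- The Lagrangian `L(x, y) = f(x) + ⟪A x − b, y⟫`. -/
def Lag (f : X → EReal) (A : X →L[ℝ] Y) (b : Y) (x : X) (y : Y) : EReal :=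
  f x + ((⟪A x - b, y⟫ : ℝ) : EReal)

/-- The smoothed duality gap `G_β((x, y); (xd, yd))`, valued in `ℝ ∪ {+∞}` (here `EReal`;
the inner expression is `−∞` exactly when `f x' = +∞`, so such `x'` do not contribute). -/
def smoothedGap (f : X → EReal) (A : X →L[ℝ] Y) (b : Y) (βx βy : ℝ)
    (x : X) (y : Y) (xd : X) (yd : Y) : EReal :=
  ⨆ w : X × Y,
    (Lag f A b x w.2 - Lag f A b w.1 y
      - ((βx / 2 * ‖w.1 - xd‖ ^ 2 + βy / 2 * ‖w.2 - yd‖ ^ 2 : ℝ) : EReal))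

/-- `f` is proper: never `−∞` and not identically `+∞`. -/
def EProper (f : X → EReal) : Prop := (∀ u, f u ≠ ⊥) ∧ ∃ u, f u ≠ ⊤

/-- Convexity for an `EReal`-valued function. -/
def EConvexOn (f : X → EReal) : Prop :=
  ∀ u v : X, ∀ t : ℝ, 0 ≤ t → t ≤ 1 →
    f (t • u + (1 - t) • v) ≤ (t : EReal) * f u + ((1 - t : ℝ) : EReal) * f v

/-- The subdifferential `∂f(x) = {q | ∀ u, f(u) ≥ f(x) + ⟪q, u − x⟫}`. -/
def ESubdiff (f : X → EReal) (x : X) : Set X :=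
  {q | ∀ u : X, f x + ((⟪q, u - x⟫ : ℝ) : EReal) ≤ f u}

/-- `p = Prox_{s f}(v)`: `p` is the (unique) minimizer of `f(·) + (1/(2s))‖· − v‖²`. -/
def IsProx (f : X → EReal) (s : ℝ) (v p : X) : Prop :=
  ∀ u : X, f p + ((1 / (2 * s) * ‖p - v‖ ^ 2 : ℝ) : EReal)
    ≤ f u + ((1 / (2 * s) * ‖u - v‖ ^ 2 : ℝ) : EReal)

/-- The Fenchel–Legendre conjugate `f*(φ) = sup_u (⟪φ, u⟫ − f(u))`. -/
def fenchel (f : X → EReal) (φ : X) : EReal := ⨆ u : X, (((⟪φ, u⟫ : ℝ) : EReal) - f u)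

/-- The domain of the Fenchel conjugate. -/
def fdom (f : X → EReal) : Set X := {φ | fenchel f φ ≠ ⊤}

/-- `a = Proj_S(v)`: `a` is the (unique, for `S` closed convex nonempty) Euclidean
projection of `v` onto `S`. -/
def IsProj (S : Set X) (v a : X) : Prop := a ∈ S ∧ ∀ u ∈ S, ‖a - v‖ ≤ ‖u - v‖

/-- `(xs, ys)` is a saddle point of the Lagrangian. -/
def IsSaddle (f : X → EReal) (A : X →L[ℝ] Y) (b : Y) (xs : X) (ys : Y) : Prop :=
  ∀ (x' : X) (y' : Y), Lag f A b xs y' ≤ Lag f A b xs ys ∧ Lag f A b xs ys ≤ Lag f A b x' ys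

/-- The set of saddle points `Z⋆`. -/
def saddleSet (f : X → EReal) (A : X →L[ℝ] Y) (b : Y) : Set (X × Y) :=
  {zs | IsSaddle f A b zs.1 zs.2}

/-- Euclidean distance from a point of `X × Y` to a set. -/
def distZ (z : X × Y) (S : Set (X × Y)) : ℝ :=
  ⨅ w : S, Real.sqrt (‖z.1 - (w : X × Y).1‖ ^ 2 + ‖z.2 - (w : X × Y).2‖ ^ 2)

/-- The projected duality gap `D(z)`, where `fx = f(x)` and `fa = f*(a)` (both finite). -/
def PDG (fx fa : ℝ) (A : X →L[ℝ] Y) (At : Y →L[ℝ] X) (b : Y) (a x : X) (y : Y) : ℝ :=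
  |fx + fa + ⟪b, y⟫| ^ 2 + ‖a + At y‖ ^ 2 + ‖A x - b‖ ^ 2

private lemma normsq_combo {X : Type*} [NormedAddCommGroup X] [InnerProductSpace ℝ X]
    (t : ℝ) (a b c : X) :
    ‖(t • a + (1 - t) • b) - c‖ ^ 2
      = t * ‖a - c‖ ^ 2 + (1 - t) * ‖b - c‖ ^ 2 - t * (1 - t) * ‖a - b‖ ^ 2 := by
  have h : (t • a + (1 - t) • b) - c = t • (a - c) + (1 - t) • (b - c) := by module
  have e1 : a - b = (a - c) - (b - c) := by abel
  rw [h, e1]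
  simp only [← real_inner_self_eq_norm_sq]
  simp only [inner_add_add_self, inner_sub_sub_self, real_inner_smul_left,
    real_inner_smul_right]
  ring

set_option maxHeartbeats 1000000 in
/-- outer-saddle gap bounded below via the self-centered gap.
If `(x⋆, y⋆)` is a saddle point of `L` and `f(x) < +∞`, then
`G_β((x⋆, y); (x, y⋆)) ≥ −√(2 βx G_β(z)) ‖x − x⋆‖` (the value `g` of the
self-centered smoothed gap, finite under the standing assumptions, is given by `hg`). -/
theorem outer_saddle_smoothedGap_ge_neg_sqrt
    [FiniteDimensional ℝ X] [FiniteDimensional ℝ Y]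
    (f : X → EReal) (A : X →L[ℝ] Y) (b : Y)
    (hf_proper : EProper f) (hf_lsc : LowerSemicontinuous f) (hf_conv : EConvexOn f)
    (βx βy : ℝ) (hβx : 0 < βx) (hβy : 0 < βy)
    (xs : X) (ys : Y) (hsaddle : IsSaddle f A b xs ys)
    (x : X) (y : Y) (hfx : f x < ⊤)
    (g : ℝ) (hg : smoothedGap f A b βx βy x y x y = (g : EReal)) :
    ((-(Real.sqrt (2 * βx * g) * ‖x - xs‖) : ℝ) : EReal)
      ≤ smoothedGap f A b βx βy xs y x ys := by
  obtain ⟨hbot, -⟩ := hf_proper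
  obtain ⟨fx, hfxr⟩ : ∃ r : ℝ, f x = (r : EReal) :=
    ⟨(f x).toReal, (EReal.coe_toReal hfx.ne (hbot x)).symm⟩
  -- f xs is finite
  have hfxs_ne_top : f xs ≠ ⊤ := by
    intro h
    have h2 := (hsaddle x ys).2
    rw [Lag, Lag, h, EReal.top_add_coe, hfxr, ← EReal.coe_add] at h2
    exact (EReal.coe_ne_top _) (top_le_iff.mp h2)
  obtain ⟨fxs, hfxsr⟩ : ∃ r : ℝ, f xs = (r : EReal) :=
    ⟨(f xs).toReal, (EReal.coe_toReal hfxs_ne_top (hbot xs)).symm⟩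
  -- A xs = b
  have hAxs : A xs - b = 0 := by
    have h1 := (hsaddle x (ys + (A xs - b))).1
    rw [Lag, Lag, hfxsr, ← EReal.coe_add, ← EReal.coe_add, EReal.coe_le_coe_iff] at h1
    have h2 : ⟪A xs - b, ys + (A xs - b)⟫ = ⟪A xs - b, ys⟫ + ‖A xs - b‖ ^ 2 := by
      rw [inner_add_right, real_inner_self_eq_norm_sq]
    have h3 : ‖A xs - b‖ ^ 2 ≤ 0 := by rw [h2] at h1; linarith
    have h4 : ‖A xs - b‖ = 0 := by nlinarith [norm_nonneg (A xs - b)]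
    exact norm_eq_zero.mp h4
  have hLagxs : Lag f A b xs ys = (fxs : EReal) := by
    rw [Lag, hfxsr, hAxs, inner_zero_left, ← EReal.coe_add, add_zero]
  -- affine minorant from the saddle point
  have hmin : ∀ u : X, (fxs : EReal) ≤ f u + ((⟪A u - b, ys⟫ : ℝ) : EReal) := by
    intro u
    have h := (hsaddle u ys).2
    rwa [hLagxs, Lag] at h
  set ax : ℝ := ⟪A x - b, y⟫ with hax
  set C : ℝ := ‖A‖ * ‖y - ys‖ with hCdef
  have hC0 : 0 ≤ C := mul_nonneg (norm_nonneg _) (norm_nonneg _)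
  set m0 : ℝ := fxs + ⟪A x - b, y - ys⟫ - C ^ 2 / (2 * βx) with hm0def
  set φ : X → EReal :=
    fun u => f u + ((⟪A u - b, y⟫ + βx / 2 * ‖u - x‖ ^ 2 : ℝ) : EReal) with hφ
  have hφ_lb : ∀ u, (m0 : EReal) ≤ φ u := by
    intro u
    rcases eq_or_ne (f u) ⊤ with h | h
    · simp only [hφ, h, EReal.top_add_coe]; exact le_top
    obtain ⟨fu, hfu⟩ : ∃ r : ℝ, f u = (r : EReal) :=
      ⟨(f u).toReal, (EReal.coe_toReal h (hbot u)).symm⟩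
    have h1 : fxs ≤ fu + ⟪A u - b, ys⟫ := by
      have h' := hmin u
      rw [hfu, ← EReal.coe_add, EReal.coe_le_coe_iff] at h'
      exact h'
    simp only [hφ, hfu, ← EReal.coe_add, EReal.coe_le_coe_iff]
    have h2 : ⟪A u - b, y⟫ = ⟪A u - b, ys⟫ + ⟪A u - b, y - ys⟫ := by
      rw [inner_sub_right]; ring
    have h3 : ⟪A u - b, y - ys⟫ - ⟪A x - b, y - ys⟫ = ⟪A (u - x), y - ys⟫ := by
      rw [← inner_sub_left]
      congr 1
      rw [map_sub]
      abel
    have h4 : |⟪A (u - x), y - ys⟫| ≤ C * ‖u - x‖ := by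
      calc |⟪A (u - x), y - ys⟫| ≤ ‖A (u - x)‖ * ‖y - ys‖ := abs_real_inner_le_norm _ _
        _ ≤ (‖A‖ * ‖u - x‖) * ‖y - ys‖ := by
            gcongr
            exact A.le_opNorm _
        _ = C * ‖u - x‖ := by rw [hCdef]; ring
    have h5 := (abs_le.mp h4).1
    have hD : 2 * βx * (C ^ 2 / (2 * βx)) = C ^ 2 := by field_simp
    rw [hm0def, h2]
    nlinarith [sq_nonneg (βx * ‖u - x‖ - C), hβx, h1, h3, h5, hD]
  set m : EReal := ⨅ u, φ u with hm
  have hm_lb : (m0 : EReal) ≤ m := le_iInf hφ_lb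
  have hm_ne_bot : m ≠ ⊥ := by
    intro h
    rw [h, le_bot_iff] at hm_lb
    exact EReal.coe_ne_bot _ hm_lb
  have hφx : φ x = ((fx + (ax + βx / 2 * ‖x - x‖ ^ 2) : ℝ) : EReal) := by
    simp only [hφ, hfxr, ← EReal.coe_add, hax]
  have hm_ne_top : m ≠ ⊤ := by
    intro h
    have h1 : m ≤ φ x := iInf_le _ x
    rw [h, hφx, top_le_iff] at h1
    exact EReal.coe_ne_top _ h1
  obtain ⟨mR, hmR⟩ : ∃ r : ℝ, m = (r : EReal) :=
    ⟨m.toReal, (EReal.coe_toReal hm_ne_top hm_ne_bot).symm⟩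
  have hg' : (⨆ w : X × Y, (Lag f A b x w.2 - Lag f A b w.1 y
      - ((βx / 2 * ‖w.1 - x‖ ^ 2 + βy / 2 * ‖w.2 - y‖ ^ 2 : ℝ) : EReal))) = (g : EReal) := hg
  have hgoal_sup : smoothedGap f A b βx βy xs y x ys
      = ⨆ w : X × Y, (Lag f A b xs w.2 - Lag f A b w.1 y
        - ((βx / 2 * ‖w.1 - x‖ ^ 2 + βy / 2 * ‖w.2 - ys‖ ^ 2 : ℝ) : EReal)) := rfl
  set d : ℝ := ‖x - xs‖ with hd
  have hd0 : 0 ≤ d := norm_nonneg _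
  set c : ℝ → ℝ := fun t =>
    -(βx * d * Real.sqrt (2 * (g + t) / (βx * (1 - t)))) - βx * t * d ^ 2 / 2 - t with hcdef
  have hkey : ∀ t : ℝ, 0 < t → t < 1 → ((c t : ℝ) : EReal)
      ≤ smoothedGap f A b βx βy xs y x ys := by
    intro t ht ht1
    have h1t : 0 < 1 - t := by linarith
    have h1 : (⨅ u, φ u) < ((mR + t ^ 2 : ℝ) : EReal) := by
      rw [← hm, hmR, EReal.coe_lt_coe_iff]
      nlinarith
    obtain ⟨xb, hxb⟩ := iInf_lt_iff.mp h1
    have hfxb_ne_top : f xb ≠ ⊤ := by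
      intro h
      rw [hφ] at hxb
      simp only [h, EReal.top_add_coe] at hxb
      exact (not_top_lt) hxb
    obtain ⟨fb, hfb⟩ : ∃ r : ℝ, f xb = (r : EReal) :=
      ⟨(f xb).toReal, (EReal.coe_toReal hfxb_ne_top (hbot xb)).symm⟩
    set ab : ℝ := ⟪A xb - b, y⟫ with hab
    set r : ℝ := ‖xb - x‖ with hr
    have hr0 : 0 ≤ r := norm_nonneg _
    have hxb_lt : fb + (ab + βx / 2 * r ^ 2) < mR + t ^ 2 := by
      have hφxb : φ xb = ((fb + (ab + βx / 2 * r ^ 2) : ℝ) : EReal) := by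
        simp only [hφ, hfb, ← EReal.coe_add, hab, hr]
      rw [hφxb, EReal.coe_lt_coe_iff] at hxb
      exact hxb
    -- key convexity consequence
    have hkeyu : ∀ (u : X) (fu : ℝ), f u = (fu : EReal) →
        mR ≤ t * fu + (1 - t) * fb + (t * ⟪A u - b, y⟫ + (1 - t) * ab
          + βx / 2 * (t * ‖u - x‖ ^ 2 + (1 - t) * r ^ 2 - t * (1 - t) * ‖u - xb‖ ^ 2)) := by
      intro u fu hfu
      set v : X := t • u + (1 - t) • xb with hv
      have hconv := hf_conv u xb t ht.le ht1.le
      rw [hfu, hfb, ← EReal.coe_mul, ← EReal.coe_mul, ← EReal.coe_add] at hconv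
      have hφv : m ≤ φ v := iInf_le _ v
      have hφv2 : φ v ≤ (((t * fu + (1 - t) * fb)
          + (⟪A v - b, y⟫ + βx / 2 * ‖v - x‖ ^ 2) : ℝ) : EReal) := by
        rw [EReal.coe_add]
        exact add_le_add_left hconv _
      have hreal : mR ≤ (t * fu + (1 - t) * fb)
          + (⟪A v - b, y⟫ + βx / 2 * ‖v - x‖ ^ 2) := by
        have h'' := (hmR ▸ hφv).trans hφv2
        exact EReal.coe_le_coe_iff.mp h''
      have hAv0 : A v - b = t • (A u - b) + (1 - t) • (A xb - b) := by
        rw [hv, map_add, map_smul, map_smul]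
        module
      have hAv : ⟪A v - b, y⟫ = t * ⟪A u - b, y⟫ + (1 - t) * ab := by
        rw [hAv0, inner_add_left, real_inner_smul_left, real_inner_smul_left, hab]
      have hnv : ‖v - x‖ ^ 2 = t * ‖u - x‖ ^ 2 + (1 - t) * ‖xb - x‖ ^ 2
          - t * (1 - t) * ‖u - xb‖ ^ 2 := normsq_combo t u xb x
      rw [hAv, hnv, ← hr] at hreal
      linarith [hreal]
    -- u = x
    have hK1 := hkeyu x fx hfxr
    rw [sub_self, norm_zero] at hK1
    have hxxb : ‖x - xb‖ = r := by rw [hr, norm_sub_rev]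
    rw [hxxb] at hK1
    have hK1' : fb + ab + βx / 2 * r ^ 2 + βx / 2 * ((1 - t) * r ^ 2) ≤ fx + ax + t := by
      have hmul : t * (fb + ab + βx / 2 * r ^ 2 + βx / 2 * ((1 - t) * r ^ 2))
          ≤ t * (fx + ax + t) := by nlinarith [hK1, hxb_lt]
      exact le_of_mul_le_mul_left hmul ht
    -- u = xs
    have hK2 := hkeyu xs fxs hfxsr
    rw [hAxs, inner_zero_left] at hK2
    have hxsx : ‖xs - x‖ = d := by rw [hd, norm_sub_rev]
    rw [hxsx] at hK2
    set s : ℝ := ‖xs - xb‖ with hs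
    have hs0 : 0 ≤ s := norm_nonneg _
    have hK2' : fb + ab + βx / 2 * r ^ 2 + βx / 2 * ((1 - t) * s ^ 2)
        ≤ fxs + βx / 2 * d ^ 2 + t := by
      have hmul : t * (fb + ab + βx / 2 * r ^ 2 + βx / 2 * ((1 - t) * s ^ 2))
          ≤ t * (fxs + βx / 2 * d ^ 2 + t) := by nlinarith [hK2, hxb_lt]
      exact le_of_mul_le_mul_left hmul ht
    -- bound from the self-centered gap g
    have hK3 : (fx + ax) - (fb + ab) - βx / 2 * r ^ 2 ≤ g := by
      have hterm : Lag f A b x y - Lag f A b xb y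
          - ((βx / 2 * ‖xb - x‖ ^ 2 + βy / 2 * ‖y - y‖ ^ 2 : ℝ) : EReal)
          = (((fx + ax) - (fb + ab) - βx / 2 * r ^ 2 : ℝ) : EReal) := by
        rw [Lag, Lag, hfxr, hfb, ← EReal.coe_add, ← EReal.coe_add, ← hax, ← hab, ← hr,
          sub_self, norm_zero, ← EReal.coe_sub, ← EReal.coe_sub]
        norm_num
      have hle := le_iSup (fun w : X × Y => Lag f A b x w.2 - Lag f A b w.1 y
          - ((βx / 2 * ‖w.1 - x‖ ^ 2 + βy / 2 * ‖w.2 - y‖ ^ 2 : ℝ) : EReal)) ((xb, y) : X × Y)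
      rw [hg'] at hle
      simp only at hle
      rw [hterm] at hle
      exact EReal.coe_le_coe_iff.mp hle
    -- r is small
    have hgt : βx / 2 * ((1 - t) * r ^ 2) ≤ g + t := by linarith
    set Rr : ℝ := Real.sqrt (2 * (g + t) / (βx * (1 - t))) with hRr
    have hRr0 : 0 ≤ Rr := Real.sqrt_nonneg _
    have hpos : 0 < βx * (1 - t) := mul_pos hβx h1t
    have hgt0 : 0 ≤ g + t := by nlinarith [sq_nonneg r]
    have hrR : r ≤ Rr := by
      rw [hRr, Real.le_sqrt hr0 (div_nonneg (by linarith) hpos.le)]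
      rw [le_div_iff₀ hpos]
      nlinarith [hgt]
    -- lower bound for the outer-saddle gap via the point (xb, ys)
    have hH : (((fxs - (fb + ab) - βx / 2 * r ^ 2 : ℝ)) : EReal)
        ≤ smoothedGap f A b βx βy xs y x ys := by
      have hterm : Lag f A b xs ys - Lag f A b xb y
          - ((βx / 2 * ‖xb - x‖ ^ 2 + βy / 2 * ‖ys - ys‖ ^ 2 : ℝ) : EReal)
          = ((fxs - (fb + ab) - βx / 2 * r ^ 2 : ℝ) : EReal) := by
        rw [hLagxs, Lag, hfb, ← EReal.coe_add, ← hab, ← hr,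
          sub_self, norm_zero, ← EReal.coe_sub, ← EReal.coe_sub]
        norm_num
      have hle := le_iSup (fun w : X × Y => Lag f A b xs w.2 - Lag f A b w.1 y
          - ((βx / 2 * ‖w.1 - x‖ ^ 2 + βy / 2 * ‖w.2 - ys‖ ^ 2 : ℝ) : EReal)) ((xb, ys) : X × Y)
      rw [← hgoal_sup] at hle
      simp only at hle
      rw [hterm] at hle
      exact hle
    refine le_trans ?_ hH
    rw [EReal.coe_le_coe_iff]
    -- real arithmetic endgame for fixed t
    have htri : d ≤ r + s := by
      have h' := dist_triangle x xb xs
      rw [dist_eq_norm, dist_eq_norm, dist_eq_norm] at h'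
      calc d = ‖x - xs‖ := hd
        _ ≤ ‖x - xb‖ + ‖xb - xs‖ := h'
        _ = r + s := by rw [hr, hs, norm_sub_rev x xb, norm_sub_rev xb xs]
    have hcase : 0 ≤ (1 - t) * (s ^ 2 - d ^ 2) + 2 * d * r := by
      rcases le_or_gt r d with hc | hc
      · have h1 : d - r ≤ s := by linarith
        have h2 : (d - r) ^ 2 ≤ s ^ 2 := by nlinarith
        nlinarith [mul_nonneg (mul_nonneg hd0 hr0) ht.le,
          mul_nonneg (sq_nonneg r) h1t.le]
      · nlinarith [sq_nonneg s, mul_nonneg hd0 (le_of_lt (sub_pos.mpr hc)),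
          mul_nonneg (sq_nonneg d) ht.le]
    have hrRd : βx * d * r ≤ βx * d * Rr := by
      have := mul_le_mul_of_nonneg_left hrR (mul_nonneg hβx.le hd0)
      linarith
    simp only [hcdef]
    have e2 : -(βx * d * r) - βx * t * d ^ 2 / 2
        ≤ βx / 2 * ((1 - t) * s ^ 2) - βx / 2 * d ^ 2 := by
      have hhalf := mul_nonneg hβx.le hcase
      linarith [hhalf]
    rw [← hRr]
    linarith [hK2', e2, hrRd]
  -- endgame: take the limit t → 0⁺
  have hg0 : (0 : ℝ) ≤ g := by
    have hterm : Lag f A b x y - Lag f A b x y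
        - ((βx / 2 * ‖x - x‖ ^ 2 + βy / 2 * ‖y - y‖ ^ 2 : ℝ) : EReal) = (((0 : ℝ)) : EReal) := by
      rw [Lag, hfxr, ← EReal.coe_add, sub_self, sub_self, norm_zero, norm_zero,
        ← EReal.coe_sub, ← EReal.coe_sub]
      norm_num
    have hle := le_iSup (fun w : X × Y => Lag f A b x w.2 - Lag f A b w.1 y
        - ((βx / 2 * ‖w.1 - x‖ ^ 2 + βy / 2 * ‖w.2 - y‖ ^ 2 : ℝ) : EReal)) ((x, y) : X × Y)
    rw [hg'] at hle
    simp only at hle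
    rw [hterm] at hle
    exact EReal.coe_le_coe_iff.mp hle
  have hc0 : c 0 = -(Real.sqrt (2 * βx * g) * d) := by
    simp only [hcdef]
    have h1 : 2 * (g + 0) / (βx * (1 - 0)) = 2 * g / βx := by
      rw [add_zero, sub_zero, mul_one]
    have h2 : 2 * βx * g = βx ^ 2 * (2 * g / βx) := by
      field_simp
    rw [h1, h2, Real.sqrt_mul (sq_nonneg βx), Real.sqrt_sq hβx.le]
    ring
  rcases eq_or_ne (smoothedGap f A b βx βy xs y x ys) ⊤ with hT | hT
  · rw [hT]; exact le_top
  have hbotS : smoothedGap f A b βx βy xs y x ys ≠ ⊥ := by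
    intro h
    have h' := hkey (1/2) (by norm_num) (by norm_num)
    rw [h, le_bot_iff] at h'
    exact EReal.coe_ne_bot _ h'
  obtain ⟨S0, hS0⟩ : ∃ r0 : ℝ, smoothedGap f A b βx βy xs y x ys = (r0 : EReal) :=
    ⟨_, (EReal.coe_toReal hT hbotS).symm⟩
  rw [hS0, EReal.coe_le_coe_iff]
  have hub : ∀ t ∈ Set.Ioo (0 : ℝ) 1, c t ≤ S0 := by
    intro t htIoo
    have h' := hkey t htIoo.1 htIoo.2
    rw [hS0, EReal.coe_le_coe_iff] at h'
    exact h'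
  have hcont : ContinuousAt c 0 := by
    simp only [hcdef]
    have hdiv : ContinuousAt (fun t : ℝ => 2 * (g + t) / (βx * (1 - t))) 0 := by
      apply ContinuousAt.div
      · fun_prop
      · fun_prop
      · simp [hβx.ne']
    have hsq : ContinuousAt (fun t : ℝ =>
        Real.sqrt (2 * (g + t) / (βx * (1 - t)))) 0 :=
      (Real.continuous_sqrt.continuousAt).comp hdiv
    have hlin1 : ContinuousAt (fun t : ℝ => βx * t * d ^ 2 / 2) 0 :=
      (((continuous_const.mul continuous_id).mul continuous_const).div_const 2).continuousAt
    have hlin2 : ContinuousAt (fun t : ℝ => t) 0 := continuous_id.continuousAt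
    exact (((hsq.const_mul (βx * d)).neg).sub hlin1).sub hlin2
  have htend : Filter.Tendsto c (nhdsWithin 0 (Set.Ioi 0)) (nhds (c 0)) :=
    hcont.tendsto.mono_left nhdsWithin_le_nhds
  have hfin : c 0 ≤ S0 := by
    refine le_of_tendsto htend ?_
    filter_upwards [Ioo_mem_nhdsGT_of_mem
      (by norm_num : (0 : ℝ) ∈ Set.Ico (0 : ℝ) 1)] with t htIoo
    exact hub t htIoo
  rw [hc0] at hfin
  exact hfin
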